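/- Let {f_k} (k ≥ 1) be a frame for an infinite-dimensional separable Hilbert space H and suppose the kernel of the synthesis operator U is invariant under the right-shift operator on ℓ²(ℕ). Then the sequence {f_k} is linearly independent (every finite linear combination ∑_{k=1}^N c_k f_k = 0 forces all c_k = 0). -/

import Mathlib

open scoped ComplexInnerProductSpace

/-- A sequence `f` in a Hilbert space is a frame if there exist constants
`A, B > 0` with `A‖x‖² ≤ ∑ᵢ |⟨x, f i⟩|² ≤ B‖x‖²` for all `x`. -/
def IsFrame {ι H : Type*} [NormedAddCommGroup H] [InnerProductSpace ℂ H] (f : ι → H) : Prop :=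
  ∃ A B : ℝ, 0 < A ∧ 0 < B ∧ ∀ x : H,
    A * ‖x‖ ^ 2 ≤ ∑' i, ‖⟪x, f i⟫‖ ^ 2 ∧ ∑' i, ‖⟪x, f i⟫‖ ^ 2 ≤ B * ‖x‖ ^ 2

/-- If a frame `{f_k}` for an infinite-dimensional separable Hilbert space has the kernel of
its synthesis operator invariant under the right shift, then `{f_k}` is linearly
independent. -/
theorem stmt2 {H : Type*} [NormedAddCommGroup H] [InnerProductSpace ℂ H] [CompleteSpace H]
    [TopologicalSpace.SeparableSpace H] (hdim : ¬ FiniteDimensional ℂ H)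
    (f : ℕ → H) (hf : IsFrame f)
    (hker : ∀ c : ℕ → ℂ, Summable (fun k => ‖c k‖ ^ 2) →
      HasSum (fun k => c k • f k) (0 : H) → HasSum (fun k => c k • f (k + 1)) (0 : H)) :
    LinearIndependent ℂ f := by
  rw [linearIndependent_iff']
  intro s g hg
  by_contra hcon
  push_neg at hcon
  obtain ⟨i0, hi0s, hi0⟩ := hcon
  classical
  set T : Finset ℕ := s.filter (fun k => g k ≠ 0) with hT
  have hTne : T.Nonempty := ⟨i0, by simp [hT, hi0s, hi0]⟩
  set m : ℕ := T.max' hTne with hm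
  have hmT : m ∈ T := T.max'_mem hTne
  have hgm : g m ≠ 0 := (Finset.mem_filter.mp hmT).2
  set c : ℕ → ℂ := fun k => if k ∈ T then g k else 0 with hc
  have hcsupp : ∀ k ∉ T, c k = 0 := fun k hk => by simp [hc, hk]
  have hcT : ∀ k ∈ T, c k = g k := fun k hk => by simp [hc, hk]
  have hsumT : ∑ k ∈ T, g k • f k = 0 := by
    rw [← hg]
    apply Finset.sum_filter_of_ne
    intro x _ h hx0
    exact h (by rw [hx0, zero_smul])
  -- key: for every n, HasSum (fun k => c k • f (k + n)) 0
  have key : ∀ n : ℕ, HasSum (fun k => c k • f (k + n)) (0 : H) := by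
    intro n
    induction n with
    | zero =>
        have hz : ∑ k ∈ T, c k • f (k + 0) = 0 := by
          rw [← hsumT]
          exact Finset.sum_congr rfl fun k hk => by rw [hcT k hk, Nat.add_zero]
        exact hz ▸ hasSum_sum_of_ne_finset_zero (s := T)
          (f := fun k => c k • f (k + 0)) (fun k hk => by simp [hcsupp k hk])
    | succ n ih =>
        set d : ℕ → ℂ := fun k => if h : n ≤ k then c (k - n) else 0 with hd
        have hdr : ∀ x ∉ Set.range (fun j : ℕ => j + n), d x = 0 := by
          intro x hx
          have hnx : ¬ n ≤ x := by
            intro h; exact hx ⟨x - n, show x - n + n = x by omega⟩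
          simp [hd, hnx]
        have hdc : ∀ j : ℕ, d (j + n) = c j := by
          intro j; simp [hd, Nat.add_sub_cancel]
        have hinj : Function.Injective (fun j : ℕ => j + n) := add_left_injective n
        have hd0 : HasSum (fun k => d k • f k) (0 : H) := by
          rw [← (hinj.hasSum_iff (by intro x hx; simp [hdr x hx]))]
          have : ((fun k => d k • f k) ∘ fun j : ℕ => j + n)
              = fun j => c j • f (j + n) := by
            funext j; simp only [Function.comp_apply, hdc]
          rw [this]; exact ih
        have hdsq : Summable (fun k => ‖d k‖ ^ 2) := by
          apply summable_of_ne_finset_zero (s := T.image (fun k => k + n))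
          intro k hk
          have hdk : d k = 0 := by
            by_cases h : n ≤ k
            · have hkT : k - n ∉ T := by
                intro hmem
                exact hk (Finset.mem_image.mpr ⟨k - n, hmem, by omega⟩)
              simp [hd, h, hcsupp _ hkT]
            · simp [hd, h]
          simp [hdk]
        have hd1 := hker d hdsq hd0
        rw [← (hinj.hasSum_iff (by intro x hx; simp [hdr x hx]))] at hd1
        have heq : ((fun k => d k • f (k + 1)) ∘ fun j : ℕ => j + n)
            = fun j => c j • f (j + (n + 1)) := by
          funext j
          simp only [Function.comp_apply, hdc]
          rw [Nat.add_assoc]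
        rwa [heq] at hd1
  -- V = span of f '' {i | i < m}
  set V : Submodule ℂ H := Submodule.span ℂ (f '' {i | i < m}) with hV
  have hVfd : FiniteDimensional ℂ V := by
    apply FiniteDimensional.span_of_finite
    exact (Set.finite_Iio m).image f
  -- all f j ∈ V
  have hall : ∀ j : ℕ, f j ∈ V := by
    intro j
    induction j using Nat.strong_induction_on with
    | _ j IH =>
      by_cases hj : j < m
      · exact Submodule.subset_span ⟨j, hj, rfl⟩
      · obtain ⟨n, rfl⟩ : ∃ n, j = m + n := ⟨j - m, by omega⟩
        have hsum : ∑ k ∈ T, c k • f (k + n) = 0 := by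
          have h1 : HasSum (fun k => c k • f (k + n)) (∑ k ∈ T, c k • f (k + n)) :=
            hasSum_sum_of_ne_finset_zero (s := T)
            (f := fun k => c k • f (k + n)) (fun k hk => by simp [hcsupp k hk])
          exact h1.unique (key n)
        rw [← Finset.add_sum_erase _ _ hmT] at hsum
        have hcm : c m ≠ 0 := by rw [hcT m hmT]; exact hgm
        have hfm : f (m + n) = (-(c m)⁻¹) • ∑ k ∈ T.erase m, c k • f (k + n) := by
          have heq : c m • f (m + n) = - ∑ k ∈ T.erase m, c k • f (k + n) := by
            rw [eq_neg_iff_add_eq_zero]; exact hsum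
          rw [neg_smul, ← smul_neg, ← heq, smul_smul, inv_mul_cancel₀ hcm, one_smul]
        rw [hfm]
        apply Submodule.smul_mem
        apply Submodule.sum_mem
        intro k hk
        apply Submodule.smul_mem
        have hkm : k < m := by
          have hle := T.le_max' k (Finset.mem_of_mem_erase hk)
          have hne := Finset.ne_of_mem_erase hk
          omega
        exact IH (k + n) (by omega)
  -- V ᗮ = ⊥ via frame lower bound
  obtain ⟨A, B, hA, hB, hframe⟩ := hf
  have horth : Vᗮ = ⊥ := by
    rw [Submodule.eq_bot_iff]
    intro x hx
    have hinner : ∀ k, ⟪x, f k⟫ = 0 := by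
      intro k
      have h := (Submodule.mem_orthogonal V x).mp hx (f k) (hall k)
      rw [← inner_conj_symm, h, map_zero]
    have h0 : (∑' i, ‖⟪x, f i⟫‖ ^ 2) = 0 := by simp [hinner]
    have hle := (hframe x).1
    rw [h0] at hle
    have h2 : ‖x‖ ^ 2 ≤ 0 := by nlinarith
    have h3 : ‖x‖ ^ 2 = 0 := le_antisymm h2 (sq_nonneg _)
    exact norm_eq_zero.mp (sq_eq_zero_iff.mp h3)
  have hVtop : V = ⊤ := by
    rw [← V.orthogonal_orthogonal, horth, Submodule.bot_orthogonal_eq_top]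
  have hTopFd : FiniteDimensional ℂ (⊤ : Submodule ℂ H) := hVtop ▸ hVfd
  exact hdim (Module.Finite.equiv (Submodule.topEquiv (R := ℂ) (M := H)))
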